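/- Let A be a finite abelian group isomorphic to Z/r₁Z × Z/r₂Z with n ∣ r₁ ∣ r₂. The homomorphism ψ : A/nA → A[n] induced by Q ↦ (r₂/n)·Q is an isomorphism if and only if gcd(r₂/r₁, n) = 1. -/
import Mathlib


private lemma aux_smul_zero {r s : ℕ} (h : r ∣ s) (x : ZMod r) : s • x = 0 := by
  obtain ⟨c, rfl⟩ := h
  have hr : r • x = 0 := by rw [nsmul_eq_mul, ZMod.natCast_self, zero_mul]
  rw [mul_comm, mul_smul, hr, smul_zero]

private lemma aux_prod_smul_zero {r₁ r₂ : ℕ} (h₂ : r₁ ∣ r₂) (Q : ZMod r₁ × ZMod r₂) :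
    r₂ • Q = 0 := by
  ext
  · rw [Prod.smul_fst, aux_smul_zero h₂]; rfl
  · rw [Prod.smul_snd, aux_smul_zero (dvd_refl r₂)]; rfl

private lemma aux_nsmul_cast (r c m : ℕ) :
    m • ((c : ZMod r)) = ((m * c : ℕ) : ZMod r) := by
  rw [Nat.cast_mul, nsmul_eq_mul]

/-- Let `A = ZMod r₁ × ZMod r₂` with `n ∣ r₁ ∣ r₂`.  The homomorphism
`ψ : A ⧸ nA → A[n]` induced by `Q ↦ (r₂/n) • Q` is well defined, and any such
induced homomorphism is an isomorphism if and only if `gcd (r₂/r₁) n = 1`.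
Here `nA` is the range and `A[n]` the kernel of the multiplication-by-`n` map. -/
theorem stmt_1 (n r₁ r₂ : ℕ) (hn : 0 < n) (h₁ : n ∣ r₁) (h₂ : r₁ ∣ r₂) :
    (∃ ψ : (ZMod r₁ × ZMod r₂) ⧸
          (AddMonoidHom.range (zsmulAddGroupHom (n : ℤ) :
            (ZMod r₁ × ZMod r₂) →+ (ZMod r₁ × ZMod r₂))) →+
          (AddMonoidHom.ker (zsmulAddGroupHom (n : ℤ) :
            (ZMod r₁ × ZMod r₂) →+ (ZMod r₁ × ZMod r₂))),
        ∀ Q : ZMod r₁ × ZMod r₂,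
          (ψ (QuotientAddGroup.mk Q) : ZMod r₁ × ZMod r₂) = (r₂ / n : ℕ) • Q) ∧
    (∀ ψ : (ZMod r₁ × ZMod r₂) ⧸
          (AddMonoidHom.range (zsmulAddGroupHom (n : ℤ) :
            (ZMod r₁ × ZMod r₂) →+ (ZMod r₁ × ZMod r₂))) →+
          (AddMonoidHom.ker (zsmulAddGroupHom (n : ℤ) :
            (ZMod r₁ × ZMod r₂) →+ (ZMod r₁ × ZMod r₂))),
        (∀ Q : ZMod r₁ × ZMod r₂,
          (ψ (QuotientAddGroup.mk Q) : ZMod r₁ × ZMod r₂) = (r₂ / n : ℕ) • Q) →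
        (Function.Bijective ψ ↔ Nat.gcd (r₂ / r₁) n = 1)) := by
  set A := ZMod r₁ × ZMod r₂ with hA
  set φ : A →+ A := zsmulAddGroupHom (n : ℤ) with hφ
  have hndvd : n ∣ r₂ := h₁.trans h₂
  have hnm : n * (r₂ / n) = r₂ := Nat.mul_div_cancel' hndvd
  have hmn : (r₂ / n) * n = r₂ := Nat.div_mul_cancel hndvd
  set k : ℕ := r₂ / r₁ with hk
  have hr1k : r₁ * k = r₂ := Nat.mul_div_cancel' h₂
  -- the natural map A → ker φ
  have hmem : ∀ Q : A, (zsmulAddGroupHom (((r₂ / n : ℕ) : ℤ)) : A →+ A) Q ∈ φ.ker := by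
    intro Q
    rw [AddMonoidHom.mem_ker, hφ, zsmulAddGroupHom_apply, zsmulAddGroupHom_apply,
      smul_smul, ← Int.natCast_mul, hnm, natCast_zsmul]
    exact aux_prod_smul_zero h₂ Q
  set f : A →+ φ.ker :=
    AddMonoidHom.codRestrict (zsmulAddGroupHom (((r₂ / n : ℕ) : ℤ))) φ.ker hmem with hf
  constructor
  · -- existence
    have hle : φ.range ≤ f.ker := by
      rintro x ⟨P, rfl⟩
      rw [AddMonoidHom.mem_ker]
      apply Subtype.ext
      show (zsmulAddGroupHom (((r₂ / n : ℕ) : ℤ)) : A →+ A) (φ P) = 0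
      rw [hφ, zsmulAddGroupHom_apply, zsmulAddGroupHom_apply,
        smul_smul, ← Int.natCast_mul, hmn, natCast_zsmul]
      exact aux_prod_smul_zero h₂ P
    refine ⟨QuotientAddGroup.lift φ.range f hle, fun Q => ?_⟩
    rw [QuotientAddGroup.lift_mk]
    show (zsmulAddGroupHom (((r₂ / n : ℕ) : ℤ)) : A →+ A) Q = (r₂ / n : ℕ) • Q
    rw [zsmulAddGroupHom_apply, natCast_zsmul]
  · intro ψ hψ
    constructor
    · -- bijective → gcd = 1
      intro hbij
      by_contra hg
      set g : ℕ := Nat.gcd k n with hgdef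
      have hgpos : 0 < g := Nat.gcd_pos_of_pos_right k hn
      have hg1 : 1 < g := lt_of_le_of_ne hgpos (fun h => hg h.symm)
      have hgn : g ∣ n := Nat.gcd_dvd_right k n
      have hgk : g ∣ k := Nat.gcd_dvd_left k n
      set Q₀ : A := (((n / g : ℕ) : ZMod r₁), (0 : ZMod r₂)) with hQ₀
      have hdvd : r₁ ∣ (r₂ / n) * (n / g) := by
        have h5 : (r₂ / n) * (n / g) * g = r₂ := by
          rw [mul_assoc, Nat.div_mul_cancel hgn, hmn]
        have h6 : r₁ * (k / g) * g = r₂ := by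
          rw [mul_assoc, Nat.div_mul_cancel hgk, hr1k]
        exact ⟨k / g, Nat.eq_of_mul_eq_mul_right hgpos (h5.trans h6.symm)⟩
      have hker : ψ (QuotientAddGroup.mk Q₀) = 0 := by
        apply Subtype.ext
        show (ψ (QuotientAddGroup.mk Q₀) : A) = 0
        rw [hψ Q₀]
        ext
        · show (r₂ / n) • ((n / g : ℕ) : ZMod r₁) = 0
          rw [aux_nsmul_cast]
          exact (ZMod.natCast_eq_zero_iff _ _).mpr hdvd
        · show (r₂ / n) • (0 : ZMod r₂) = 0
          rw [smul_zero]
      have hne : (QuotientAddGroup.mk Q₀ :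
          A ⧸ φ.range) ≠ 0 := by
        intro hzero
        obtain ⟨P, hP⟩ := (QuotientAddGroup.eq_zero_iff Q₀).mp hzero
        have hP1 : (n : ℤ) • P.1 = ((n / g : ℕ) : ZMod r₁) := by
          have := congrArg Prod.fst hP
          rwa [hφ, zsmulAddGroupHom_apply, Prod.smul_fst] at this
        have hcast : ((n / g : ℕ) : ZMod n) = 0 := by
          have := congrArg (ZMod.castHom h₁ (ZMod n)) hP1
          rw [map_zsmul, natCast_zsmul, nsmul_eq_mul, ZMod.natCast_self, zero_mul,
            map_natCast] at this
          exact this.symm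
        have hdvd2 : n ∣ n / g := (ZMod.natCast_eq_zero_iff _ _).mp hcast
        have hpos : 0 < n / g := Nat.div_pos (Nat.le_of_dvd hn hgn) hgpos
        have hlt : n / g < n := Nat.div_lt_self hn hg1
        exact absurd (Nat.le_of_dvd hpos hdvd2) (not_le.mpr hlt)
      exact hne (hbij.injective (by rw [hker, map_zero]))
    · -- gcd = 1 → bijective
      intro hgcd
      by_cases hn1 : n = 1
      · -- trivial case
        subst hn1
        have hφid : ∀ x : A, φ x = x := fun x => by
          rw [hφ, zsmulAddGroupHom_apply, Nat.cast_one, one_zsmul]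
        have hall : ∀ a : A ⧸ φ.range, a = 0 := by
          intro a
          obtain ⟨Q, rfl⟩ := QuotientAddGroup.mk_surjective a
          exact (QuotientAddGroup.eq_zero_iff Q).mpr ⟨Q, hφid Q⟩
        constructor
        · intro a b _
          rw [hall a, hall b]
        · intro b
          refine ⟨0, Subtype.ext ?_⟩
          have hb : (b : A) = 0 := by
            have h2 := b.2
            rwa [AddMonoidHom.mem_ker, hφid] at h2
          rw [map_zero, hb]; rfl
      · -- main case: n > 1, hence r₁, r₂ > 0
        have hr₂ : r₂ ≠ 0 := by
          intro h
          apply hn1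
          rw [hk, h, Nat.zero_div, Nat.gcd_zero_left] at hgcd
          exact hgcd
        have hr₁ : r₁ ≠ 0 := by
          intro h
          exact hr₂ (Nat.eq_zero_of_zero_dvd (h ▸ h₂))
        haveI : NeZero r₁ := ⟨hr₁⟩
        haveI : NeZero r₂ := ⟨hr₂⟩
        have hr₁pos : 0 < r₁ := Nat.pos_of_ne_zero hr₁
        have hr₂pos : 0 < r₂ := Nat.pos_of_ne_zero hr₂
        have hr₁npos : 0 < r₁ / n := Nat.div_pos (Nat.le_of_dvd hr₁pos h₁) hn
        have hmpos : 0 < r₂ / n := Nat.div_pos (Nat.le_of_dvd hr₂pos hndvd) hn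
        have hmk : r₂ / n = (r₁ / n) * k := by
          apply Nat.eq_of_mul_eq_mul_right hn
          rw [hmn, mul_assoc, mul_comm k n, ← mul_assoc, Nat.div_mul_cancel h₁, hr1k]
        rw [Nat.bijective_iff_injective_and_card]
        constructor
        · -- injective
          rw [injective_iff_map_eq_zero]
          intro a ha
          obtain ⟨Q, rfl⟩ := QuotientAddGroup.mk_surjective a
          have h0 : (r₂ / n : ℕ) • Q = 0 := by
            rw [← hψ Q, ha]; rfl
          have h0₁ : (r₂ / n) • Q.1 = 0 := by
            have := congrArg Prod.fst h0; rwa [Prod.smul_fst] at this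
          have h0₂ : (r₂ / n) • Q.2 = 0 := by
            have := congrArg Prod.snd h0; rwa [Prod.smul_snd] at this
          -- first component: n ∣ Q.1.val
          have hc1 : ((r₂ / n * Q.1.val : ℕ) : ZMod r₁) = 0 := by
            rw [← aux_nsmul_cast, ZMod.natCast_val, ZMod.cast_id, h0₁]
          have hd1 : r₁ ∣ (r₂ / n) * Q.1.val :=
            (ZMod.natCast_eq_zero_iff _ _).mp hc1
          have hd1' : n ∣ k * Q.1.val := by
            have hd1'' : (r₁ / n) * n ∣ (r₁ / n) * (k * Q.1.val) := by
              rw [Nat.div_mul_cancel h₁, ← mul_assoc, ← hmk]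
              exact hd1
            exact (Nat.mul_dvd_mul_iff_left hr₁npos).mp hd1''
          have hnX : n ∣ Q.1.val :=
            (Nat.coprime_comm.mp hgcd).dvd_of_dvd_mul_left hd1'
          -- second component: n ∣ Q.2.val
          have hc2 : ((r₂ / n * Q.2.val : ℕ) : ZMod r₂) = 0 := by
            rw [← aux_nsmul_cast, ZMod.natCast_val, ZMod.cast_id, h0₂]
          have hd2 : r₂ ∣ (r₂ / n) * Q.2.val :=
            (ZMod.natCast_eq_zero_iff _ _).mp hc2
          have hnY : n ∣ Q.2.val := by
            have hd2' : (r₂ / n) * n ∣ (r₂ / n) * Q.2.val := by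
              rw [hmn]; exact hd2
            exact (Nat.mul_dvd_mul_iff_left hmpos).mp hd2'
          refine (QuotientAddGroup.eq_zero_iff Q).mpr
            ⟨(((Q.1.val / n : ℕ) : ZMod r₁), ((Q.2.val / n : ℕ) : ZMod r₂)), ?_⟩
          rw [hφ, zsmulAddGroupHom_apply]
          ext
          · show (n : ℤ) • ((Q.1.val / n : ℕ) : ZMod r₁) = Q.1
            rw [natCast_zsmul, aux_nsmul_cast, Nat.mul_div_cancel' hnX,
              ZMod.natCast_val, ZMod.cast_id]
          · show (n : ℤ) • ((Q.2.val / n : ℕ) : ZMod r₂) = Q.2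
            rw [natCast_zsmul, aux_nsmul_cast, Nat.mul_div_cancel' hnY,
              ZMod.natCast_val, ZMod.cast_id]
        · -- cardinalities agree
          have c1 : Nat.card A = Nat.card (A ⧸ φ.range) * Nat.card φ.range :=
            AddSubgroup.card_eq_card_quotient_mul_card_addSubgroup _
          have c2 : Nat.card A = Nat.card (A ⧸ φ.ker) * Nat.card φ.ker :=
            AddSubgroup.card_eq_card_quotient_mul_card_addSubgroup _
          have c3 : Nat.card (A ⧸ φ.ker) = Nat.card φ.range :=
            Nat.card_congr (QuotientAddGroup.quotientKerEquivRange φ).toEquiv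
          have hbpos : 0 < Nat.card φ.range := Nat.card_pos
          rw [c3] at c2
          rw [c2, mul_comm] at c1
          exact Nat.eq_of_mul_eq_mul_right hbpos
            (by rw [← c1])
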